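/- arXiv:2101.00617 — 4 statements merged into one kernel-verified Lean document; each statement's English description precedes it below -/
import Mathlib

section
/- For all integers j ≥ 2 and n ≥ 2, m_j(K_{1,2}, P_4, nK_2) ≥ ⌊2n/j⌋ + 1. Equivalently, with t = ⌊2n/j⌋, there exists a 3-coloring of the edges of K_{j×t} containing no copy of K_{1,2} in the first color, no copy of P_4 in the second color, and no matching nK_2 in the third color. -/
open SimpleGraph

/-- The complete multipartite graph `K_{j x t}` with `j` parts, each of size `t`. -/
def multiK (j t : ℕ) : SimpleGraph (Fin j × Fin t) where
  Adj a b := a.1 ≠ b.1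
  symm := ⟨fun _ _ h => Ne.symm h⟩
  loopless := ⟨fun _ h => h rfl⟩

/-- `G` contains a copy of `H`. -/
def Contains {α β : Type*} (G : SimpleGraph α) (H : SimpleGraph β) : Prop :=
  ∃ f : β → α, Function.Injective f ∧ ∀ ⦃a b⦄, H.Adj a b → G.Adj (f a) (f b)

/-- The monochromatic subgraph of `G` in color `i` under the edge-coloring `c`. -/
def colorClass {α : Type*} {k : ℕ} (G : SimpleGraph α) (c : Sym2 α → Fin k) (i : Fin k) :
    SimpleGraph α where
  Adj a b := G.Adj a b ∧ c s(a, b) = i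
  symm := ⟨fun _ _ h => ⟨h.1.symm, by rw [Sym2.eq_swap]; exact h.2⟩⟩
  loopless := ⟨fun a h => G.loopless.irrefl a h.1⟩

/-- The stripe `nK₂`: the graph consisting of `n` pairwise disjoint edges. -/
def stripe (n : ℕ) : SimpleGraph (Fin n × Fin 2) where
  Adj a b := a.1 = b.1 ∧ a.2 ≠ b.2
  symm := ⟨fun _ _ h => ⟨h.1.symm, h.2.symm⟩⟩
  loopless := ⟨fun _ h => h.2 rfl⟩

/-- Every 3-coloring of the edges of `K_{j x t}` yields a copy of `K_{1,2}` in color 0,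
or of `P₄` in color 1, or of `nK₂` in color 2. -/
def Arrows3 (j t n : ℕ) : Prop :=
  ∀ c : Sym2 (Fin j × Fin t) → Fin 3,
    Contains (colorClass (multiK j t) c 0) (pathGraph 3) ∨
    Contains (colorClass (multiK j t) c 1) (pathGraph 4) ∨
    Contains (colorClass (multiK j t) c 2) (stripe n)

/-- Every 2-coloring of the edges of `K_{j x t}` yields a copy of `nK₂` in color 0
or of `C₇` in color 1. -/
def ArrowsC7 (j t n : ℕ) : Prop :=
  ∀ c : Sym2 (Fin j × Fin t) → Fin 2,
    Contains (colorClass (multiK j t) c 0) (stripe n) ∨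
    Contains (colorClass (multiK j t) c 1) (cycleGraph 7)

/-- The good coloring: color all edges at a fixed vertex `v` with color 1 (a star, hence no
`P₄`), all other edges with color 2.  Color 0 is empty, and since `j * t ≤ 2 * n`, the
color-2 graph misses `v` and thus has too few vertices for a matching `nK₂`. -/
lemma good_coloring (j t n : ℕ) (hj : 0 < j) (ht : 0 < t) (h : j * t ≤ 2 * n) :
    ∃ c : Sym2 (Fin j × Fin t) → Fin 3,
      ¬ Contains (colorClass (multiK j t) c 0) (pathGraph 3) ∧
      ¬ Contains (colorClass (multiK j t) c 1) (pathGraph 4) ∧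
      ¬ Contains (colorClass (multiK j t) c 2) (stripe n) := by
  set v : Fin j × Fin t := (⟨0, hj⟩, ⟨0, ht⟩) with hv
  refine ⟨fun e => if v ∈ e then 1 else 2, ?_, ?_, ?_⟩
  · rintro ⟨f, hf, hadj⟩
    have h01 : (pathGraph 3).Adj 0 1 := pathGraph_adj.mpr (Or.inl rfl)
    have hc := (hadj h01).2
    dsimp only at hc
    split_ifs at hc <;> exact absurd hc (by decide)
  · rintro ⟨f, hf, hadj⟩
    have mem : ∀ a b : Fin 4, (pathGraph 4).Adj a b → (v = f a ∨ v = f b) := by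
      intro a b hab
      have hc := (hadj hab).2
      dsimp only at hc
      by_cases hm : v ∈ s(f a, f b)
      · exact Sym2.mem_iff.mp hm
      · rw [if_neg hm] at hc; exact absurd hc (by decide)
    have h01 := mem 0 1 (pathGraph_adj.mpr (Or.inl rfl))
    have h23 := mem 2 3 (pathGraph_adj.mpr (Or.inl rfl))
    rcases h01 with a | a <;> rcases h23 with b | b <;>
      exact absurd (hf (a.symm.trans b)) (by decide)
  · rintro ⟨f, hf, hadj⟩
    have hne : ∀ x : Fin n × Fin 2, f x ≠ v := by
      intro x hx
      have hadj' : (stripe n).Adj x (x.1, x.2 + 1) := by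
        refine ⟨rfl, ?_⟩
        have : ∀ a : Fin 2, a ≠ a + 1 := by decide
        exact this x.2
      have hc := (hadj hadj').2
      dsimp only at hc
      rw [if_pos (Sym2.mem_iff.mpr (Or.inl hx.symm))] at hc
      exact absurd hc (by decide)
    have hnr : v ∉ Set.range f := by rintro ⟨x, hx⟩; exact hne x hx
    have hcard := Fintype.card_lt_of_injective_of_notMem f hf hnr
    simp only [Fintype.card_prod, Fintype.card_fin] at hcard
    omega

theorem stmt1 (j n : ℕ) (hj : 2 ≤ j) (hn : 2 ≤ n) :
    (∀ t : ℕ, 0 < t → Arrows3 j t n → 2 * n / j + 1 ≤ t) ∧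
    (∃ c : Sym2 (Fin j × Fin (2 * n / j)) → Fin 3,
      ¬ Contains (colorClass (multiK j (2 * n / j)) c 0) (pathGraph 3) ∧
      ¬ Contains (colorClass (multiK j (2 * n / j)) c 1) (pathGraph 4) ∧
      ¬ Contains (colorClass (multiK j (2 * n / j)) c 2) (stripe n)) := by
  have hmul : ∀ t : ℕ, t ≤ 2 * n / j → j * t ≤ 2 * n := by
    intro t htle
    calc j * t ≤ j * (2 * n / j) := Nat.mul_le_mul_left j htle
      _ ≤ 2 * n := Nat.mul_div_le (2 * n) j
  constructor
  · intro t ht hA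
    by_contra hlt
    push_neg at hlt
    obtain ⟨c, h0, h1, h2⟩ := good_coloring j t n (by omega) ht (hmul t (by omega))
    rcases hA c with h | h | h
    · exact h0 h
    · exact h1 h
    · exact h2 h
  · rcases Nat.eq_zero_or_pos (2 * n / j) with h0 | hpos
    · refine ⟨fun _ => 0, ?_, ?_, ?_⟩ <;> rintro ⟨f, -, -⟩
      · exact absurd (f 0).2.2 (by omega)
      · exact absurd (f 0).2.2 (by omega)
      · exact absurd (f (⟨0, by omega⟩, 0)).2.2 (by omega)
    · exact good_coloring j _ n (by omega) hpos (hmul _ le_rfl)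
end

section
/- Let G be the graph K_4 − e, the complete graph on 4 vertices with one edge removed. For every subgraph H of G, either H contains a copy of the star K_{1,2}, or the complement of H within G (the graph on the same vertices whose edges are the edges of G not in H) contains a copy of the path P_4. -/
open SimpleGraph

/-- The graph `K₄ - e`: the complete graph on 4 vertices with the edge `{0, 1}` removed. -/
def K4e : SimpleGraph (Fin 4) where
  Adj a b := a ≠ b ∧ ¬(a = 0 ∧ b = 1) ∧ ¬(a = 1 ∧ b = 0)
  symm := ⟨fun _ _ h => ⟨h.1.symm, fun hc => h.2.2 ⟨hc.2, hc.1⟩, fun hc => h.2.1 ⟨hc.2, hc.1⟩⟩⟩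
  loopless := ⟨fun _ h => h.1 rfl⟩

lemma p3 {G : SimpleGraph (Fin 4)} {a b c : Fin 4} (hab : G.Adj a b) (hbc : G.Adj b c)
    (hac : a ≠ c) : Contains G (pathGraph 3) := by
  have h1 := hab.ne
  have h2 := hbc.ne
  refine ⟨![a, b, c], ?_, ?_⟩
  · intro i j hij
    fin_cases i <;> fin_cases j <;> simp_all
  · intro i j h
    rw [pathGraph_adj] at h
    fin_cases i <;> fin_cases j <;> simp_all [adj_symm]

lemma p4 {G : SimpleGraph (Fin 4)} {a b c d : Fin 4} (hab : G.Adj a b) (hbc : G.Adj b c)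
    (hcd : G.Adj c d) (hac : a ≠ c) (had : a ≠ d) (hbd : b ≠ d) : Contains G (pathGraph 4) := by
  have h1 := hab.ne
  have h2 := hbc.ne
  have h3 := hcd.ne
  refine ⟨![a, b, c, d], ?_, ?_⟩
  · intro i j hij
    fin_cases i <;> fin_cases j <;> simp_all
  · intro i j h
    rw [pathGraph_adj] at h
    fin_cases i <;> fin_cases j <;> simp_all [adj_symm]
theorem stmt3 (H : SimpleGraph (Fin 4)) (hH : H ≤ K4e) :
    Contains H (pathGraph 3) ∨ Contains (K4e \ H) (pathGraph 4) := by
  have kadj : ∀ a b : Fin 4, a ≠ b → ¬(a = 0 ∧ b = 1) → ¬(a = 1 ∧ b = 0) → K4e.Adj a b :=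
    fun _ _ h1 h2 h3 => ⟨h1, h2, h3⟩
  by_cases h02 : H.Adj 0 2 <;> by_cases h03 : H.Adj 0 3 <;>
    by_cases h12 : H.Adj 1 2 <;> by_cases h13 : H.Adj 1 3 <;> by_cases h23 : H.Adj 2 3 <;>
  first
    | exact Or.inl (p3 h02.symm h03 (by decide))
    | exact Or.inl (p3 h02 h12.symm (by decide))
    | exact Or.inl (p3 h02 h23 (by decide))
    | exact Or.inl (p3 h03 h13.symm (by decide))
    | exact Or.inl (p3 h03 h23.symm (by decide))
    | exact Or.inl (p3 h12.symm h13 (by decide))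
    | exact Or.inl (p3 h12 h23 (by decide))
    | exact Or.inl (p3 h13 h23.symm (by decide))
    | exact Or.inr (p4 (a := 0) (b := 3) (c := 2) (d := 1)
        ⟨kadj 0 3 (by decide) (by decide) (by decide), h03⟩
        ⟨kadj 3 2 (by decide) (by decide) (by decide), fun h => h23 h.symm⟩
        ⟨kadj 2 1 (by decide) (by decide) (by decide), fun h => h12 h.symm⟩
        (by decide) (by decide) (by decide))
    | exact Or.inr (p4 (a := 0) (b := 2) (c := 3) (d := 1)
        ⟨kadj 0 2 (by decide) (by decide) (by decide), h02⟩
        ⟨kadj 2 3 (by decide) (by decide) (by decide), h23⟩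
        ⟨kadj 3 1 (by decide) (by decide) (by decide), fun h => h13 h.symm⟩
        (by decide) (by decide) (by decide))
    | exact Or.inr (p4 (a := 2) (b := 0) (c := 3) (d := 1)
        ⟨kadj 2 0 (by decide) (by decide) (by decide), fun h => h02 h.symm⟩
        ⟨kadj 0 3 (by decide) (by decide) (by decide), h03⟩
        ⟨kadj 3 1 (by decide) (by decide) (by decide), fun h => h13 h.symm⟩
        (by decide) (by decide) (by decide))
end

section
/- Every 2-coloring of the edges of the complete 4-partite graph K_{4×2} (four parts of size 2) contains a matching 2K_2 in the first color or a cycle C_7 in the second color; moreover there is a 2-coloring of the edges of K_{4×1} = K_4 containing neither. Hence m_4(2K_2, C_7) = 2. -/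
open SimpleGraph

/- ### Auxiliary lemmas -/

instance (n : ℕ) : DecidableRel (stripe n).Adj :=
  fun a b => inferInstanceAs (Decidable (a.1 = b.1 ∧ a.2 ≠ b.2))

lemma parts4 : ∀ p : Fin 4,
    p ≠ p+1 ∧ p ≠ p+2 ∧ p ≠ p+3 ∧ p+1 ≠ p+2 ∧ p+1 ≠ p+3 ∧ p+2 ≠ p+3 := by decide

lemma fourth4 : ∀ p1 p2 p3 : Fin 4, p1 ≠ p2 → p1 ≠ p3 → p2 ≠ p3 →
    ∃ p4 : Fin 4, p4 ≠ p1 ∧ p4 ≠ p2 ∧ p4 ≠ p3 := by decide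

lemma fin2cases : ∀ i : Fin 2, i = 0 ∨ i = 1 := by decide
lemma fin2ne : ∀ q : Fin 2, q + 1 ≠ q := by decide
lemma fin2one : ∀ i : Fin 2, i ≠ 0 → i = 1 := by decide

lemma pne1 : ∀ (x y : Fin 4) (s t : Fin 2), x ≠ y → ((x,s) : Fin 4 × Fin 2) ≠ (y,t) :=
  fun _ _ _ _ h hh => h (congrArg Prod.fst hh)

lemma pne2 : ∀ (x : Fin 4) (s t : Fin 2), s ≠ t → ((x,s) : Fin 4 × Fin 2) ≠ (x,t) :=
  fun _ _ _ h hh => h (congrArg Prod.snd hh)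

lemma aux_no_stripe : ¬ Contains (colorClass (multiK 4 1) (fun _ => (1 : Fin 2)) 0) (stripe 2) := by
  rintro ⟨f, -, hadj⟩
  have h := hadj (show (stripe 2).Adj ((0:Fin 2),(0:Fin 2)) ((0:Fin 2),(1:Fin 2)) by decide)
  simpa using h.2

lemma aux_no_c7 (c : Sym2 (Fin 4 × Fin 1) → Fin 2) :
    ¬ Contains (colorClass (multiK 4 1) c 1) (cycleGraph 7) := by
  rintro ⟨f, hinj, -⟩
  have := Fintype.card_le_of_injective f hinj
  simp [Fintype.card_prod] at this

lemma arrows42 : ArrowsC7 4 2 2 := by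
  intro c
  by_cases hP : ∃ a b a' b' : Fin 4 × Fin 2,
      (a.1 ≠ b.1 ∧ c s(a,b) = 0) ∧ (a'.1 ≠ b'.1 ∧ c s(a',b') = 0) ∧
      a ≠ a' ∧ a ≠ b' ∧ b ≠ a' ∧ b ≠ b'
  · left
    obtain ⟨a, b, a', b', h1, h2, d1, d2, d3, d4⟩ := hP
    have hab : a ≠ b := fun h => h1.1 (by rw [h])
    have hab' : a' ≠ b' := fun h => h2.1 (by rw [h])
    have H1 : (colorClass (multiK 4 2) c 0).Adj a b := h1
    have H2 : (colorClass (multiK 4 2) c 0).Adj a' b' := h2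
    refine ⟨fun pq => match pq with
      | (0,0) => a | (0,1) => b | (1,0) => a' | (1,1) => b', ?_, ?_⟩
    · intro x y h
      fin_cases x <;> fin_cases y <;>
        first
        | rfl
        | exact absurd h hab | exact absurd h hab.symm
        | exact absurd h hab' | exact absurd h hab'.symm
        | exact absurd h d1 | exact absurd h d1.symm
        | exact absurd h d2 | exact absurd h d2.symm
        | exact absurd h d3 | exact absurd h d3.symm
        | exact absurd h d4 | exact absurd h d4.symm
    · intro x y h
      fin_cases x <;> fin_cases y <;>
        first
        | exact absurd h (by decide)
        | exact H1 | exact H1.symm | exact H2 | exact H2.symm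
  · right
    have hdisj : ∀ x z u w : Fin 4 × Fin 2, (x.1 ≠ z.1 ∧ c s(x,z) = 0) →
        (u.1 ≠ w.1 ∧ c s(u,w) = 0) → x = u ∨ x = w ∨ z = u ∨ z = w := by
      intro x z u w h1 h2
      by_contra hc
      push_neg at hc
      exact hP ⟨x, z, u, w, h1, h2, hc.1, hc.2.1, hc.2.2.1, hc.2.2.2⟩
    have Rsymm : ∀ x z : Fin 4 × Fin 2, (x.1 ≠ z.1 ∧ c s(x,z) = 0) →
        (z.1 ≠ x.1 ∧ c s(z,x) = 0) := by
      intro x z h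
      exact ⟨h.1.symm, by rw [Sym2.eq_swap]; exact h.2⟩
    by_cases hstar : ∃ v, ∀ x z : Fin 4 × Fin 2, (x.1 ≠ z.1 ∧ c s(x,z) = 0) → x = v ∨ z = v
    · -- star case: all color-0 edges go through v
      obtain ⟨v, hv⟩ := hstar
      have hc1 : ∀ x z : Fin 4 × Fin 2, x.1 ≠ z.1 → x ≠ v → z ≠ v →
          (colorClass (multiK 4 2) c 1).Adj x z := by
        intro x z h hx hz
        show x.1 ≠ z.1 ∧ c s(x,z) = 1
        refine ⟨h, fin2one _ ?_⟩
        intro h0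
        rcases hv x z ⟨h, h0⟩ with e | e
        · exact hx e
        · exact hz e
      obtain ⟨p, q⟩ := v
      obtain ⟨n1, n2, n3, n4, n5, n6⟩ := parts4 p
      have e1 : (colorClass (multiK 4 2) c 1).Adj (p, q+1) (p+1, 0) :=
        hc1 _ _ n1 (pne2 p (q+1) q (fin2ne q)) (pne1 _ _ _ _ n1.symm)
      have e2 : (colorClass (multiK 4 2) c 1).Adj (p+1, 0) (p+2, 0) :=
        hc1 _ _ n4 (pne1 _ _ _ _ n1.symm) (pne1 _ _ _ _ n2.symm)
      have e3 : (colorClass (multiK 4 2) c 1).Adj (p+2, 0) (p+3, 0) :=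
        hc1 _ _ n6 (pne1 _ _ _ _ n2.symm) (pne1 _ _ _ _ n3.symm)
      have e4 : (colorClass (multiK 4 2) c 1).Adj (p+3, 0) (p+1, 1) :=
        hc1 _ _ n5.symm (pne1 _ _ _ _ n3.symm) (pne1 _ _ _ _ n1.symm)
      have e5 : (colorClass (multiK 4 2) c 1).Adj (p+1, 1) (p+2, 1) :=
        hc1 _ _ n4 (pne1 _ _ _ _ n1.symm) (pne1 _ _ _ _ n2.symm)
      have e6 : (colorClass (multiK 4 2) c 1).Adj (p+2, 1) (p+3, 1) :=
        hc1 _ _ n6 (pne1 _ _ _ _ n2.symm) (pne1 _ _ _ _ n3.symm)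
      have e7 : (colorClass (multiK 4 2) c 1).Adj (p+3, 1) (p, q+1) :=
        hc1 _ _ n3.symm (pne1 _ _ _ _ n3.symm) (pne2 p (q+1) q (fin2ne q))
      refine ⟨fun i => match i with
        | 0 => (p, q+1) | 1 => (p+1, 0) | 2 => (p+2, 0) | 3 => (p+3, 0)
        | 4 => (p+1, 1) | 5 => (p+2, 1) | 6 => (p+3, 1), ?_, ?_⟩
      · intro i j h
        fin_cases i <;> fin_cases j <;>
          first
          | rfl
          | exact absurd h (pne1 _ _ _ _ (by assumption))
          | exact absurd h (pne1 _ _ _ _ (Ne.symm (by assumption)))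
          | exact absurd h (pne2 _ _ _ (by decide))
      · intro i j h
        fin_cases i <;> fin_cases j <;>
          first
          | exact absurd h (by decide)
          | exact e1 | exact e1.symm | exact e2 | exact e2.symm
          | exact e3 | exact e3.symm | exact e4 | exact e4.symm
          | exact e5 | exact e5.symm | exact e6 | exact e6.symm
          | exact e7 | exact e7.symm
    · -- triangle case
      push_neg at hstar
      obtain ⟨a, b, hab, -, -⟩ := hstar (0, 0)
      obtain ⟨x, z, hxz, hx, hz⟩ := hstar a
      -- get an edge b-y with y ≠ a
      have hby : ∃ y, (b.1 ≠ y.1 ∧ c s(b,y) = 0) ∧ y ≠ a := by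
        rcases hdisj a b x z hab hxz with e | e | e | e
        · exact absurd e.symm hx
        · exact absurd e.symm hz
        · exact ⟨z, e ▸ hxz, hz⟩
        · exact ⟨x, e ▸ (Rsymm x z hxz), hx⟩
      obtain ⟨y, hby, hya⟩ := hby
      have hnab : a ≠ b := fun h => hab.1 (by rw [h])
      have hnby : b ≠ y := fun h => hby.1 (by rw [h])
      -- get edge a-y
      have hay : a.1 ≠ y.1 ∧ c s(a,y) = 0 := by
        obtain ⟨u, w, huw, hu, hw⟩ := hstar b
        have D1 := hdisj a b u w hab huw
        have D2 := hdisj b y u w hby huw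
        rcases D1 with e1 | e1 | e1 | e1
        · rcases D2 with e2 | e2 | e2 | e2
          · exact absurd e2.symm hu
          · exact absurd e2.symm hw
          · exact absurd (e1.trans e2.symm) hya.symm
          · exact e1 ▸ e2 ▸ huw
        · rcases D2 with e2 | e2 | e2 | e2
          · exact absurd e2.symm hu
          · exact absurd e2.symm hw
          · exact e1 ▸ e2 ▸ (Rsymm u w huw)
          · exact absurd (e1.trans e2.symm) hya.symm
        · exact absurd e1.symm hu
        · exact absurd e1.symm hw
      have hnay : a ≠ y := fun h => hay.1 (by rw [h])
      -- every color-0 edge is inside {a, b, y}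
      have hmem : ∀ u w : Fin 4 × Fin 2, (u.1 ≠ w.1 ∧ c s(u,w) = 0) →
          u = a ∨ u = b ∨ u = y := by
        intro u w h
        by_contra hcon
        push_neg at hcon
        obtain ⟨ha', hb', hy'⟩ := hcon
        have D1 := hdisj u w a b h hab
        have D2 := hdisj u w a y h hay
        have D3 := hdisj u w b y h hby
        rcases D1 with e1 | e1 | e1 | e1
        · exact ha' e1
        · exact hb' e1
        · -- w = a
          rcases D3 with e3 | e3 | e3 | e3
          · exact hb' e3
          · exact hy' e3
          · exact hnab (e1.symm.trans e3)
          · exact hnay (e1.symm.trans e3)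
        · -- w = b
          rcases D2 with e2 | e2 | e2 | e2
          · exact ha' e2
          · exact hy' e2
          · exact hnab.symm (e1.symm.trans e2)
          · exact hnby (e1.symm.trans e2)
      have htri : ∀ u w : Fin 4 × Fin 2, (u.1 ≠ w.1 ∧ c s(u,w) = 0) →
          (u = a ∨ u = b ∨ u = y) ∧ (w = a ∨ w = b ∨ w = y) :=
        fun u w h => ⟨hmem u w h, hmem w u (Rsymm u w h)⟩
      have hc1 : ∀ x z : Fin 4 × Fin 2, x.1 ≠ z.1 →
          ((x ≠ a ∧ x ≠ b ∧ x ≠ y) ∨ (z ≠ a ∧ z ≠ b ∧ z ≠ y)) →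
          (colorClass (multiK 4 2) c 1).Adj x z := by
        intro x z h hm
        show x.1 ≠ z.1 ∧ c s(x,z) = 1
        refine ⟨h, fin2one _ ?_⟩
        intro h0
        obtain ⟨hu, hw⟩ := htri x z ⟨h, h0⟩
        rcases hm with ⟨m1, m2, m3⟩ | ⟨m1, m2, m3⟩
        · rcases hu with e | e | e
          · exact m1 e
          · exact m2 e
          · exact m3 e
        · rcases hw with e | e | e
          · exact m1 e
          · exact m2 e
          · exact m3 e
      -- name the parts
      obtain ⟨pz, z1, z2, z3⟩ := fourth4 a.1 b.1 y.1 hab.1 hay.1 hby.1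
      have z1' := z1.symm; have z2' := z2.symm; have z3' := z3.symm
      have nab := hab.1; have nab' := hab.1.symm
      have nay := hay.1; have nay' := hay.1.symm
      have nby := hby.1; have nby' := hby.1.symm
      -- cycle: b, (pz,0), y, (a.1, a.2+1), (b.1, b.2+1), (y.1, y.2+1), (pz,1)
      have wz0a : ((pz, 0) : Fin 4 × Fin 2) ≠ a := pne1 _ _ _ _ z1
      have wz0b : ((pz, 0) : Fin 4 × Fin 2) ≠ b := pne1 _ _ _ _ z2
      have wz0y : ((pz, 0) : Fin 4 × Fin 2) ≠ y := pne1 _ _ _ _ z3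
      have wz1a : ((pz, 1) : Fin 4 × Fin 2) ≠ a := pne1 _ _ _ _ z1
      have wz1b : ((pz, 1) : Fin 4 × Fin 2) ≠ b := pne1 _ _ _ _ z2
      have wz1y : ((pz, 1) : Fin 4 × Fin 2) ≠ y := pne1 _ _ _ _ z3
      have waa : ((a.1, a.2+1) : Fin 4 × Fin 2) ≠ a := pne2 _ _ _ (fin2ne a.2)
      have wab : ((a.1, a.2+1) : Fin 4 × Fin 2) ≠ b := pne1 _ _ _ _ nab
      have way : ((a.1, a.2+1) : Fin 4 × Fin 2) ≠ y := pne1 _ _ _ _ nay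
      have wba : ((b.1, b.2+1) : Fin 4 × Fin 2) ≠ a := pne1 _ _ _ _ nab'
      have wbb : ((b.1, b.2+1) : Fin 4 × Fin 2) ≠ b := pne2 _ _ _ (fin2ne b.2)
      have wby : ((b.1, b.2+1) : Fin 4 × Fin 2) ≠ y := pne1 _ _ _ _ nby
      have wya : ((y.1, y.2+1) : Fin 4 × Fin 2) ≠ a := pne1 _ _ _ _ nay'
      have wyb : ((y.1, y.2+1) : Fin 4 × Fin 2) ≠ b := pne1 _ _ _ _ nby'
      have wyy : ((y.1, y.2+1) : Fin 4 × Fin 2) ≠ y := pne2 _ _ _ (fin2ne y.2)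
      have e1 : (colorClass (multiK 4 2) c 1).Adj b (pz, 0) :=
        hc1 _ _ z2' (Or.inr ⟨wz0a, wz0b, wz0y⟩)
      have e2 : (colorClass (multiK 4 2) c 1).Adj (pz, 0) y :=
        hc1 _ _ z3 (Or.inl ⟨wz0a, wz0b, wz0y⟩)
      have e3 : (colorClass (multiK 4 2) c 1).Adj y (a.1, a.2+1) :=
        hc1 _ _ nay' (Or.inr ⟨waa, wab, way⟩)
      have e4 : (colorClass (multiK 4 2) c 1).Adj (a.1, a.2+1) (b.1, b.2+1) :=
        hc1 _ _ nab (Or.inl ⟨waa, wab, way⟩)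
      have e5 : (colorClass (multiK 4 2) c 1).Adj (b.1, b.2+1) (y.1, y.2+1) :=
        hc1 _ _ nby (Or.inl ⟨wba, wbb, wby⟩)
      have e6 : (colorClass (multiK 4 2) c 1).Adj (y.1, y.2+1) (pz, 1) :=
        hc1 _ _ z3' (Or.inl ⟨wya, wyb, wyy⟩)
      have e7 : (colorClass (multiK 4 2) c 1).Adj (pz, 1) b :=
        hc1 _ _ z2 (Or.inl ⟨wz1a, wz1b, wz1y⟩)
      refine ⟨fun i => match i with
        | 0 => b | 1 => (pz, 0) | 2 => y | 3 => (a.1, a.2+1)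
        | 4 => (b.1, b.2+1) | 5 => (y.1, y.2+1) | 6 => (pz, 1), ?_, ?_⟩
      · intro i j h
        fin_cases i <;> fin_cases j <;>
          first
          | rfl
          | exact absurd h (pne1 _ _ _ _ (by assumption))
          | exact absurd h (pne1 _ _ _ _ (Ne.symm (by assumption)))
          | exact absurd h (pne2 _ _ _ (by first | decide | exact fin2ne _ | exact (fin2ne _).symm))
      · intro i j h
        fin_cases i <;> fin_cases j <;>
          first
          | exact absurd h (by decide)
          | exact e1 | exact e1.symm | exact e2 | exact e2.symm
          | exact e3 | exact e3.symm | exact e4 | exact e4.symm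
          | exact e5 | exact e5.symm | exact e6 | exact e6.symm
          | exact e7 | exact e7.symm

theorem stmt17 :
    ArrowsC7 4 2 2 ∧
    (∃ c : Sym2 (Fin 4 × Fin 1) → Fin 2,
      ¬ Contains (colorClass (multiK 4 1) c 0) (stripe 2) ∧
      ¬ Contains (colorClass (multiK 4 1) c 1) (cycleGraph 7)) ∧
    IsLeast {t : ℕ | 0 < t ∧ ArrowsC7 4 t 2} 2 := by
  refine ⟨arrows42, ⟨fun _ => 1, aux_no_stripe, aux_no_c7 _⟩, ⟨by norm_num, arrows42⟩, ?_⟩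
  intro t ht
  obtain ⟨ht0, hA⟩ := ht
  by_contra hlt
  push_neg at hlt
  interval_cases t
  rcases hA (fun _ => 1) with h | h
  · exact aux_no_stripe h
  · exact aux_no_c7 _ h
end

section
/- Every 2-coloring of the edges of the complete 4-partite graph K_{4×3} (four parts of size 3) contains a matching 3K_2 in the first color or a cycle C_7 in the second color; moreover there is a 2-coloring of the edges of K_{4×2} containing neither. Hence m_4(3K_2, C_7) = 3. -/
open SimpleGraph

abbrev V' := Fin 4 × Fin 3

def ins (x : List V') : List (List V') → List (List V')
  | [] => [x]
  | y :: ys => if y.length ≤ x.length then x :: y :: ys else y :: ins x ys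

def isort : List (List V') → List (List V')
  | [] => []
  | x :: xs => ins x (isort xs)

def cycList (w : V' → Bool) : List V' :=
  let groups : List (List V') :=
    (List.finRange 4).map (fun i => (List.finRange 3).filterMap
      (fun j => if w (i, j) then none else some (i, j)))
  match (isort groups).flatten.take 7 with
  | [s0, s1, s2, s3, s4, s5, s6] => [s0, s4, s1, s5, s2, s6, s3]
  | _ => []

def chk (w : V' → Bool) : List V' → Bool
  | [v0, v1, v2, v3, v4, v5, v6] =>
    (!w v0) && ((!w v1) && ((!w v2) && ((!w v3) && ((!w v4) && ((!w v5) && ((!w v6) &&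
    ((v0 != v1) && ((v0 != v2) && ((v0 != v3) && ((v0 != v4) && ((v0 != v5) && ((v0 != v6) &&
    ((v1 != v2) && ((v1 != v3) && ((v1 != v4) && ((v1 != v5) && ((v1 != v6) &&
    ((v2 != v3) && ((v2 != v4) && ((v2 != v5) && ((v2 != v6) &&
    ((v3 != v4) && ((v3 != v5) && ((v3 != v6) &&
    ((v4 != v5) && ((v4 != v6) &&
    ((v5 != v6) &&
    ((v0.1 != v1.1) && ((v1.1 != v2.1) && ((v2.1 != v3.1) && ((v3.1 != v4.1) &&
    ((v4.1 != v5.1) && ((v5.1 != v6.1) && (v6.1 != v0.1))))))))))))))))))))))))))))))))))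
  | _ => false

def wOf (a b c d : V') : V' → Bool := fun v => v == a || v == b || v == c || v == d

set_option maxHeartbeats 4000000 in
theorem key_0_0 : ∀ b c d : V', chk (wOf ((0 : Fin 4), (0 : Fin 3)) b c d)
    (cycList (wOf ((0 : Fin 4), (0 : Fin 3)) b c d)) = true := by decide

set_option maxHeartbeats 4000000 in
theorem key_0_1 : ∀ b c d : V', chk (wOf ((0 : Fin 4), (1 : Fin 3)) b c d)
    (cycList (wOf ((0 : Fin 4), (1 : Fin 3)) b c d)) = true := by decide

set_option maxHeartbeats 4000000 in
theorem key_0_2 : ∀ b c d : V', chk (wOf ((0 : Fin 4), (2 : Fin 3)) b c d)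
    (cycList (wOf ((0 : Fin 4), (2 : Fin 3)) b c d)) = true := by decide

set_option maxHeartbeats 4000000 in
theorem key_1_0 : ∀ b c d : V', chk (wOf ((1 : Fin 4), (0 : Fin 3)) b c d)
    (cycList (wOf ((1 : Fin 4), (0 : Fin 3)) b c d)) = true := by decide

set_option maxHeartbeats 4000000 in
theorem key_1_1 : ∀ b c d : V', chk (wOf ((1 : Fin 4), (1 : Fin 3)) b c d)
    (cycList (wOf ((1 : Fin 4), (1 : Fin 3)) b c d)) = true := by decide

set_option maxHeartbeats 4000000 in
theorem key_1_2 : ∀ b c d : V', chk (wOf ((1 : Fin 4), (2 : Fin 3)) b c d)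
    (cycList (wOf ((1 : Fin 4), (2 : Fin 3)) b c d)) = true := by decide

set_option maxHeartbeats 4000000 in
theorem key_2_0 : ∀ b c d : V', chk (wOf ((2 : Fin 4), (0 : Fin 3)) b c d)
    (cycList (wOf ((2 : Fin 4), (0 : Fin 3)) b c d)) = true := by decide

set_option maxHeartbeats 4000000 in
theorem key_2_1 : ∀ b c d : V', chk (wOf ((2 : Fin 4), (1 : Fin 3)) b c d)
    (cycList (wOf ((2 : Fin 4), (1 : Fin 3)) b c d)) = true := by decide

set_option maxHeartbeats 4000000 in
theorem key_2_2 : ∀ b c d : V', chk (wOf ((2 : Fin 4), (2 : Fin 3)) b c d)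
    (cycList (wOf ((2 : Fin 4), (2 : Fin 3)) b c d)) = true := by decide

set_option maxHeartbeats 4000000 in
theorem key_3_0 : ∀ b c d : V', chk (wOf ((3 : Fin 4), (0 : Fin 3)) b c d)
    (cycList (wOf ((3 : Fin 4), (0 : Fin 3)) b c d)) = true := by decide

set_option maxHeartbeats 4000000 in
theorem key_3_1 : ∀ b c d : V', chk (wOf ((3 : Fin 4), (1 : Fin 3)) b c d)
    (cycList (wOf ((3 : Fin 4), (1 : Fin 3)) b c d)) = true := by decide

set_option maxHeartbeats 4000000 in
theorem key_3_2 : ∀ b c d : V', chk (wOf ((3 : Fin 4), (2 : Fin 3)) b c d)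
    (cycList (wOf ((3 : Fin 4), (2 : Fin 3)) b c d)) = true := by decide

theorem key : ∀ a b c d : V', chk (wOf a b c d) (cycList (wOf a b c d)) = true :=
  fun a => match a with
  | (0, 0) => key_0_0
  | (0, 1) => key_0_1
  | (0, 2) => key_0_2
  | (1, 0) => key_1_0
  | (1, 1) => key_1_1
  | (1, 2) => key_1_2
  | (2, 0) => key_2_0
  | (2, 1) => key_2_1
  | (2, 2) => key_2_2
  | (3, 0) => key_3_0
  | (3, 1) => key_3_1
  | (3, 2) => key_3_2

theorem chk_spec (w : V' → Bool) (L : List V') (h : chk w L = true) :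
    ∃ f : Fin 7 → V', Function.Injective f ∧ (∀ p, w (f p) = false) ∧
      ∀ p : Fin 7, (f p).1 ≠ (f (p + 1)).1 := by
  rcases L with _ | ⟨v0, _ | ⟨v1, _ | ⟨v2, _ | ⟨v3, _ | ⟨v4, _ | ⟨v5, _ | ⟨v6, _ | ⟨v7, L⟩⟩⟩⟩⟩⟩⟩⟩ <;>
    simp only [chk, Bool.and_eq_true, Bool.not_eq_true', bne_iff_ne, ne_eq,
      Bool.false_eq_true] at h
  obtain ⟨w0, w1, w2, w3, w4, w5, w6, n01, n02, n03, n04, n05, n06, n12, n13, n14, n15, n16,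
    n23, n24, n25, n26, n34, n35, n36, n45, n46, n56, a01, a12, a23, a34, a45, a56, a60⟩ := h
  refine ⟨fun p => [v0, v1, v2, v3, v4, v5, v6].getD p.val v0, ?_, ?_, ?_⟩
  · intro p q hpq
    fin_cases p <;> fin_cases q <;>
      first
        | rfl
        | exact absurd hpq (by assumption)
        | exact absurd hpq (Ne.symm (by assumption))
  · intro p; fin_cases p <;> assumption
  · intro p; fin_cases p <;> assumption

abbrev V2 := Fin 4 × Fin 2

def cEx : Sym2 V2 → Fin 2 :=
  Sym2.lift ⟨fun a b => if a.1 = 0 ∨ b.1 = 0 then 0 else 1, by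
    intro a b; simp only [or_comm]⟩

theorem fin2_ne_zero : ∀ x : Fin 2, x ≠ 0 → x = 1 := by decide

theorem noStripe : ¬ Contains (colorClass (multiK 4 2) cEx 0) (stripe 3) := by
  rintro ⟨f, finj, hadj⟩
  have hz : ∀ i : Fin 3, (f (i, 0)).1 = 0 ∨ (f (i, 1)).1 = 0 := by
    intro i
    have h := hadj (a := (i, 0)) (b := (i, 1)) ⟨rfl, Fin.zero_ne_one⟩
    have h2 := h.2
    simp only [cEx, Sym2.lift_mk] at h2
    by_contra hc
    push_neg at hc
    rw [if_neg (by tauto)] at h2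
    exact absurd h2 (by decide)
  set g : Fin 3 → V2 := fun i => if (f (i, 0)).1 = 0 then f (i, 0) else f (i, 1) with hg
  have hg0 : ∀ i, (g i).1 = 0 := by
    intro i
    rw [hg]
    rcases hz i with h | h
    · simp [h]
    · by_cases h' : (f (i, 0)).1 = 0 <;> simp [h', h]
  have hsel : ∀ k, ∃ s, g k = f (k, s) := by
    intro k; rw [hg]; dsimp only
    by_cases h' : (f (k, 0)).1 = 0
    · exact ⟨0, by rw [if_pos h']⟩
    · exact ⟨1, by rw [if_neg h']⟩
  obtain ⟨i, j, hij, h2⟩ :=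
    Fintype.exists_ne_map_eq_of_card_lt (fun i => (g i).2) (by simp)
  have hgij : g i = g j := Prod.ext_iff.2 ⟨by rw [hg0 i, hg0 j], h2⟩
  obtain ⟨si, hsi⟩ := hsel i
  obtain ⟨sj, hsj⟩ := hsel j
  rw [hsi, hsj] at hgij
  exact hij (congrArg Prod.fst (finj hgij))

theorem noC7 : ¬ Contains (colorClass (multiK 4 2) cEx 1) (cycleGraph 7) := by
  rintro ⟨f, finj, hadj⟩
  have hnz : ∀ i : Fin 7, (f i).1 ≠ 0 := by
    intro i
    have adj : (cycleGraph 7).Adj i (i + 1) := by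
      rw [cycleGraph_adj']
      exact Or.inr (by rw [add_sub_cancel_left]; rfl)
    have h2 := (hadj adj).2
    simp only [cEx, Sym2.lift_mk] at h2
    intro h0
    rw [if_pos (Or.inl h0)] at h2
    exact absurd h2 (by decide)
  have hcard : Fintype.card (Fin 7) ≤ Fintype.card {v : V2 // v.1 ≠ 0} :=
    Fintype.card_le_of_injective (fun i => ⟨f i, hnz i⟩)
      (fun i j h => finj (congrArg Subtype.val h))
  have h6 : Fintype.card {v : V2 // v.1 ≠ 0} = 6 := by decide
  rw [h6, Fintype.card_fin] at hcard
  omega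

theorem contains_card {α β : Type*} [Fintype α] [Fintype β] {G : SimpleGraph α}
    {H : SimpleGraph β} (h : Contains G H) : Fintype.card β ≤ Fintype.card α := by
  obtain ⟨f, hf, -⟩ := h
  exact Fintype.card_le_of_injective f hf

theorem cover_cycle (c : Sym2 V' → Fin 2) (a b c' d : V')
    (hW : ∀ x y : V', x ≠ a → x ≠ b → x ≠ c' → x ≠ d → y ≠ a → y ≠ b → y ≠ c' → y ≠ d →
      ¬ (colorClass (multiK 4 3) c 0).Adj x y) :
    Contains (colorClass (multiK 4 3) c 1) (cycleGraph 7) := by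
  obtain ⟨f, finj, havoid, hcons⟩ := chk_spec _ _ (key a b c' d)
  have hne4 : ∀ p : Fin 7, f p ≠ a ∧ f p ≠ b ∧ f p ≠ c' ∧ f p ≠ d := by
    intro p
    have h := havoid p
    simpa only [wOf, Bool.or_eq_false_iff, beq_eq_false_iff_ne, ne_eq, and_assoc] using h
  refine ⟨f, finj, ?_⟩
  intro i j hadj
  have hpart : (f i).1 ≠ (f j).1 := by
    rw [cycleGraph_adj'] at hadj
    rcases hadj with h | h
    · have h1 : i - j = 1 := Fin.ext h
      rw [sub_eq_iff_eq_add, add_comm] at h1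
      rw [h1]
      exact (hcons j).symm
    · have h1 : j - i = 1 := Fin.ext h
      rw [sub_eq_iff_eq_add, add_comm] at h1
      rw [h1]
      exact hcons i
  refine ⟨hpart, ?_⟩
  apply fin2_ne_zero
  intro h0
  obtain ⟨hia, hib, hic, hid⟩ := hne4 i
  obtain ⟨hja, hjb, hjc, hjd⟩ := hne4 j
  exact hW _ _ hia hib hic hid hja hjb hjc hjd ⟨hpart, h0⟩

theorem upper : ArrowsC7 4 3 3 := by
  intro c
  by_cases h0 : Contains (colorClass (multiK 4 3) c 0) (stripe 3)
  · exact Or.inl h0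
  right
  by_cases h1 : ∃ x y : V', (colorClass (multiK 4 3) c 0).Adj x y
  case neg =>
    apply cover_cycle c ((0 : Fin 4), (0 : Fin 3)) ((0 : Fin 4), (0 : Fin 3))
      ((0 : Fin 4), (0 : Fin 3)) ((0 : Fin 4), (0 : Fin 3))
    intro x y _ _ _ _ _ _ _ _ hxy
    exact h1 ⟨x, y, hxy⟩
  obtain ⟨a, b, hab⟩ := h1
  by_cases h2 : ∃ x y, (colorClass (multiK 4 3) c 0).Adj x y ∧ x ≠ a ∧ x ≠ b ∧ y ≠ a ∧ y ≠ b
  case neg =>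
    apply cover_cycle c a b a b
    intro x y hxa hxb _ _ hya hyb _ _ hxy
    exact h2 ⟨x, y, hxy, hxa, hxb, hya, hyb⟩
  obtain ⟨c', d, hcd, hca, hcb, hda, hdb⟩ := h2
  by_cases h3 : ∃ x y, (colorClass (multiK 4 3) c 0).Adj x y ∧
      x ≠ a ∧ x ≠ b ∧ x ≠ c' ∧ x ≠ d ∧ y ≠ a ∧ y ≠ b ∧ y ≠ c' ∧ y ≠ d
  case neg =>
    apply cover_cycle c a b c' d
    intro x y hxa hxb hxc hxd hya hyb hyc hyd hxy
    exact h3 ⟨x, y, hxy, hxa, hxb, hxc, hxd, hya, hyb, hyc, hyd⟩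
  obtain ⟨x, y, hxy, hxa, hxb, hxc, hxd, hya, hyb, hyc, hyd⟩ := h3
  exfalso
  apply h0
  have hne_ab : a ≠ b := fun h => hab.1 (by rw [h])
  have hne_cd : c' ≠ d := fun h => hcd.1 (by rw [h])
  have hne_xy : x ≠ y := fun h => hxy.1 (by rw [h])
  refine ⟨fun p => [a, b, c', d, x, y].getD (p.1.val * 2 + p.2.val) a, ?_, ?_⟩
  · intro p q hpq
    obtain ⟨p1, p2⟩ := p
    obtain ⟨q1, q2⟩ := q
    fin_cases p1 <;> fin_cases p2 <;> fin_cases q1 <;> fin_cases q2 <;>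
      first
        | rfl
        | exact absurd hpq (by assumption)
        | exact absurd hpq (Ne.symm (by assumption))
  · rintro ⟨p1, p2⟩ ⟨q1, q2⟩ hpq
    fin_cases p1 <;> fin_cases p2 <;> fin_cases q1 <;> fin_cases q2 <;>
      first
        | exact absurd rfl hpq.2
        | exact absurd hpq.1 (by decide)
        | exact hab
        | exact hab.symm
        | exact hcd
        | exact hcd.symm
        | exact hxy
        | exact hxy.symm

theorem stmt18 :
    ArrowsC7 4 3 3 ∧
    (∃ c : Sym2 (Fin 4 × Fin 2) → Fin 2,
      ¬ Contains (colorClass (multiK 4 2) c 0) (stripe 3) ∧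
      ¬ Contains (colorClass (multiK 4 2) c 1) (cycleGraph 7)) ∧
    IsLeast {t : ℕ | 0 < t ∧ ArrowsC7 4 t 3} 3 := by
  refine ⟨upper, ⟨cEx, noStripe, noC7⟩, ⟨⟨by norm_num, upper⟩, ?_⟩⟩
  rintro t ⟨ht0, hA⟩
  by_contra hlt
  push_neg at hlt
  interval_cases t
  · rcases hA (fun _ => 0) with h | h
    · have := contains_card h
      simp only [Fintype.card_prod, Fintype.card_fin] at this
      omega
    · have := contains_card h
      simp only [Fintype.card_prod, Fintype.card_fin] at this
      omega
  · rcases hA cEx with h | h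
    · exact noStripe h
    · exact noC7 h
end
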